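/- Let A be a Büchi automaton over an alphabet Σ and w an infinite word, and let M_m denote the counting-monitor state reached after reading the length-m prefix of w. Then for every m : ℕ, M_m is exactly the set of pairs (q, c) for which there exists a finite run ρ of A on the length-m prefix of w with ρ m = q whose number of final visits equals c. -/

import Mathlib

/-- A finite run on the length-`m` prefix of `w`: `ρ 0 = q₀` and
`δ (ρ i) (w i) (ρ (i+1))` for all `i < m`. -/
def FinRun {α Q : Type*} (q₀ : Q) (δ : Q → α → Q → Prop) (w : ℕ → α) (m : ℕ)
    (ρ : Fin (m + 1) → Q) : Prop :=
  ρ 0 = q₀ ∧ ∀ i : Fin m, δ (ρ i.castSucc) (w i.val) (ρ i.succ)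

/-- The number of final visits of a finite run. -/
noncomputable def finalVisits {Q : Type*} (F : Set Q) {m : ℕ} (ρ : Fin (m + 1) → Q) : ℕ :=
  {i : Fin (m + 1) | ρ i ∈ F}.ncard

open Classical in
/-- `chi F q` is `1` if `q` is a final state, and `0` otherwise. -/
noncomputable def chi {Q : Type*} (F : Set Q) (q : Q) : ℕ := if q ∈ F then 1 else 0

/-- Post-image of a counting-monitor state upon reading letter `a`. -/
noncomputable def post {α Q : Type*} (δ : Q → α → Q → Prop) (F : Set Q)
    (M : Set (Q × ℕ)) (a : α) : Set (Q × ℕ) :=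
  {p : Q × ℕ | ∃ q c, (q, c) ∈ M ∧ δ q a p.1 ∧ p.2 = c + chi F p.1}

/-- The counting-monitor state reached after reading the length-`m` prefix of `w`. -/
noncomputable def monState {α Q : Type*} (q₀ : Q) (δ : Q → α → Q → Prop) (F : Set Q)
    (w : ℕ → α) : ℕ → Set (Q × ℕ)
  | 0 => {(q₀, chi F q₀)}
  | m + 1 => post δ F (monState q₀ δ F w m) (w m)

lemma finalVisits_eq_sum {Q : Type*} (F : Set Q) {m : ℕ} (ρ : Fin (m + 1) → Q) :
    finalVisits F ρ = ∑ i, chi F (ρ i) := by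
  classical
  unfold finalVisits chi
  rw [Set.ncard_eq_toFinset_card']
  simp only [Set.toFinset_setOf, Finset.card_filter]

lemma finalVisits_snoc {Q : Type*} (F : Set Q) {m : ℕ} (ρ : Fin (m + 1) → Q) (q : Q) :
    finalVisits F (Fin.snoc ρ q) = finalVisits F ρ + chi F q := by
  simp [finalVisits_eq_sum, Fin.sum_univ_castSucc]

theorem monState_eq_finRun_image {α Q : Type*} [Fintype Q]
    (q₀ : Q) (δ : Q → α → Q → Prop) (F : Set Q) (w : ℕ → α) :
    ∀ m : ℕ, monState q₀ δ F w m =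
      {p : Q × ℕ | ∃ ρ : Fin (m + 1) → Q, FinRun q₀ δ w m ρ ∧
        ρ (Fin.last m) = p.1 ∧ finalVisits F ρ = p.2} := by
  intro m
  induction m with
  | zero =>
    ext ⟨q, c⟩
    simp only [monState, Set.mem_singleton_iff, Prod.mk.injEq, Set.mem_setOf_eq]
    constructor
    · rintro ⟨hq, hc⟩
      refine ⟨fun _ => q₀, ⟨rfl, fun i => i.elim0⟩, hq.symm, ?_⟩
      rw [hc, finalVisits_eq_sum]; simp
    · rintro ⟨ρ, ⟨h0, _⟩, hl, hc⟩
      have hρ : ∀ i, ρ i = q₀ := by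
        intro i
        have : i = 0 := Fin.ext (by omega)
        rw [this]; exact h0
      constructor
      · rw [← hl, hρ]
      · rw [← hc, finalVisits_eq_sum]
        simp [hρ]
  | succ m ih =>
    ext ⟨q, c⟩
    simp only [monState, post, Set.mem_setOf_eq, ih]
    constructor
    · rintro ⟨q', c', ⟨ρ, hrun, hlast, hcnt⟩, hδ, rfl⟩
      refine ⟨Fin.snoc ρ q, ⟨?_, ?_⟩, ?_, ?_⟩
      · rw [show (0 : Fin (m + 2)) = Fin.castSucc 0 by rfl, Fin.snoc_castSucc]
        exact hrun.1
      · intro i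
        induction i using Fin.lastCases with
        | last =>
          simpa [Fin.snoc_castSucc, Fin.succ_last, Fin.snoc_last, hlast] using hδ
        | cast j =>
          have := hrun.2 j
          rw [Fin.succ_castSucc, Fin.snoc_castSucc, Fin.snoc_castSucc]
          exact this
      · simp
      · rw [finalVisits_snoc, hcnt]
    · rintro ⟨ρ, ⟨h0, hstep⟩, hlast, hcnt⟩
      refine ⟨ρ (Fin.last m).castSucc, finalVisits F (Fin.init ρ),
        ⟨Fin.init ρ, ⟨?_, ?_⟩, ?_, rfl⟩, ?_, ?_⟩
      · simpa [Fin.init] using h0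
      · intro i
        have h := hstep i.castSucc
        rw [Fin.succ_castSucc] at h
        exact h
      · rfl
      · have := hstep (Fin.last m)
        simpa [Fin.succ_last, hlast] using this
      · have hρ : ρ = Fin.snoc (Fin.init ρ) (ρ (Fin.last (m+1))) :=
          (Fin.snoc_init_self ρ).symm
        rw [← hcnt]
        conv_lhs => rw [hρ]
        rw [finalVisits_snoc, hlast]
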